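/- Let C be an n×n symmetric Kalmanson matrix and let I ⊆ {1,…,n} be a nonempty subset. Then the tour that visits the elements of I in increasing order of their indices has length less than or equal to the length of every tour on I; likewise the tour visiting the elements of I in decreasing order of their indices is optimal. -/

import Mathlib

/-- Length of a walk along a list of nodes (sum of consecutive edge costs). -/
def pathLen {α : Type*} (C : α → α → ℝ) : List α → ℝ
  | [] => 0
  | [_] => 0
  | a :: b :: t => C a b + pathLen C (b :: t)

/-- Length of the closed tour visiting the nodes of `l` in order and
returning from the last node to the first one. -/
def tourLen {α : Type*} (C : α → α → ℝ) (l : List α) : ℝ :=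
  pathLen C (l ++ l.take 1)

/-- `l` is a tour on the finite set `I`: an enumeration of the elements of `I`,
each appearing exactly once. -/
def IsTourOn {α : Type*} [DecidableEq α] (I : Finset α) (l : List α) : Prop :=
  l.Nodup ∧ l.toFinset = I

/-- Kalmanson conditions for a symmetric matrix indexed by `Fin n`. -/
def IsKalmanson {n : ℕ} (C : Fin n → Fin n → ℝ) : Prop :=
  ∀ i j k l : Fin n, i < j → j < k → k < l →
    C i j + C k l ≤ C i k + C j l ∧ C i l + C j k ≤ C i k + C j l

section Aux

variable {α : Type*} (C : α → α → ℝ)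

lemma pathLen_append : ∀ (l : List α) (h : l ≠ []) (y : α),
    pathLen C (l ++ [y]) = pathLen C l + C (l.getLast h) y
  | [a], _, y => by simp [pathLen]
  | a :: b :: t, _, y => by
    have ih := pathLen_append (b :: t) (by simp) y
    simp only [List.cons_append] at ih ⊢
    rw [pathLen, pathLen, List.getLast_cons (by simp : (b :: t) ≠ []), ih]
    ring

lemma tourLen_cons (m a : α) (t : List α) :
    tourLen C (m :: a :: t) = tourLen C (a :: t)
      + C m a + C ((a :: t).getLast (by simp)) m - C ((a :: t).getLast (by simp)) a := by
  have h1 : tourLen C (m :: a :: t) = C m a + pathLen C ((a :: t) ++ [m]) := by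
    simp only [tourLen, List.take, List.cons_append]
    rw [pathLen]
  have h2 : tourLen C (a :: t) = pathLen C ((a :: t) ++ [a]) := by
    simp [tourLen]
  rw [h1, h2, pathLen_append C (a :: t) (by simp) m, pathLen_append C (a :: t) (by simp) a]
  ring

lemma tourLen_concat (a m : α) (t : List α) :
    tourLen C ((a :: t) ++ [m]) = tourLen C (a :: t)
      + C ((a :: t).getLast (by simp)) m + C m a - C ((a :: t).getLast (by simp)) a := by
  have h1 : tourLen C ((a :: t) ++ [m]) = pathLen C (((a :: t) ++ [m]) ++ [a]) := by
    simp [tourLen]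
  have h2 : tourLen C (a :: t) = pathLen C ((a :: t) ++ [a]) := by
    simp [tourLen]
  have h3 : ((a :: t) ++ [m]).getLast (by simp) = m := by simp
  rw [h1, h2, pathLen_append C ((a :: t) ++ [m]) (by simp) a,
    pathLen_append C (a :: t) (by simp) m, pathLen_append C (a :: t) (by simp) a, h3]
  ring

lemma tourLen_rot1 (x : α) (xs : List α) :
    tourLen C (x :: xs) = tourLen C (xs ++ [x]) := by
  cases xs with
  | nil => simp [tourLen]
  | cons a t =>
    rw [tourLen_cons, tourLen_concat]
    ring

lemma tourLen_rot (m : α) : ∀ (l₁ l₂ : List α),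
    tourLen C (l₁ ++ m :: l₂) = tourLen C (m :: (l₂ ++ l₁))
  | [], l₂ => by simp
  | x :: l₁, l₂ => by
    have e1 : (x :: l₁) ++ m :: l₂ = x :: (l₁ ++ m :: l₂) := by simp
    rw [e1, tourLen_rot1, List.append_assoc]
    have e2 : m :: l₂ ++ [x] = m :: (l₂ ++ [x]) := by simp
    rw [e2, tourLen_rot m l₁ (l₂ ++ [x])]
    simp

lemma pathLen_reverse (hsym : ∀ i j, C i j = C j i) : ∀ (l : List α),
    pathLen C l.reverse = pathLen C l
  | [] => by simp [pathLen]
  | [a] => by simp [pathLen]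
  | a :: b :: t => by
    have ih := pathLen_reverse hsym (b :: t)
    have hne : (b :: t).reverse ≠ [] := by simp
    have : (a :: b :: t).reverse = (b :: t).reverse ++ [a] := by simp
    rw [this, pathLen_append C _ hne a, ih, List.getLast_reverse hne]
    simp only [List.head_cons, pathLen]
    rw [hsym b a]
    ring

lemma tourLen_reverse (hsym : ∀ i j, C i j = C j i) (l : List α) :
    tourLen C l.reverse = tourLen C l := by
  cases l with
  | nil => simp
  | cons a t =>
    have hne : (a :: t) ≠ [] := by simp
    have h1 : ((a :: t).reverse).take 1 = [(a :: t).getLast hne] := by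
      rw [List.take_one, List.head?_reverse, List.getLast?_eq_getLast hne]
      rfl
    have h2 : (a :: t).reverse ++ [(a :: t).getLast hne]
        = ((a :: t).getLast hne :: a :: t).reverse := by
      simp
    rw [tourLen, h1, h2, pathLen_reverse C hsym]
    rw [tourLen]
    simp only [List.take, pathLen]
    rw [pathLen_append C (a :: t) hne a, hsym ((a :: t).getLast hne) a]
    ring

lemma sorted_le_getLast [Preorder α] {l : List α} (hs : l.Pairwise (· ≤ ·)) {x : α}
    (hx : x ∈ l) (hne : l ≠ []) : x ≤ l.getLast hne := by
  have hS : l.dropLast ++ [l.getLast hne] = l := List.dropLast_append_getLast hne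
  have hs' : (l.dropLast ++ [l.getLast hne]).Pairwise (· ≤ ·) := by rw [hS]; exact hs
  obtain ⟨-, -, hrel⟩ := List.pairwise_append.mp hs'
  rw [← hS] at hx
  rcases List.mem_append.mp hx with h | h
  · exact hrel _ h _ (by simp)
  · simp only [List.mem_singleton] at h
    exact le_of_eq h

lemma sorted_head_le [Preorder α] {f : α} {l : List α} (hs : (f :: l).Pairwise (· ≤ ·))
    {x : α} (hx : x ∈ f :: l) : f ≤ x := by
  rcases List.mem_cons.mp hx with rfl | h
  · exact le_rfl
  · exact List.rel_of_pairwise_cons hs h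

lemma kalmanson_key {n : ℕ} (C : Fin n → Fin n → ℝ) (hsym : ∀ i j, C i j = C j i)
    (hkal : IsKalmanson C) {f a b g m : Fin n}
    (h1 : f ≤ a) (h2 : a < b) (h3 : b ≤ g) (h4 : g < m) :
    C g m + C m f - C g f ≤ C m a + C b m - C b a := by
  rcases h1.eq_or_lt with rfl | h1' <;> rcases h3.eq_or_lt with rfl | h3'
  · linarith [hsym m f, hsym b m, hsym b f]
  · obtain ⟨k1, -⟩ := hkal f b g m h2 h3' h4
    linarith [hsym m f, hsym f b, hsym f g, hsym b f, hsym b m, hsym m f]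
  · obtain ⟨-, k2⟩ := hkal f a b m h1' h2 h4
    linarith [hsym m f, hsym f m, hsym a b, hsym f b, hsym a m, hsym m a, hsym b a, hsym b f]
  · obtain ⟨k1, -⟩ := hkal a b g m h2 h3' h4
    obtain ⟨-, k2⟩ := hkal f a g m h1' (h2.trans h3') h4
    linarith [hsym m f, hsym f m, hsym a g, hsym f g, hsym a m, hsym m a, hsym b a, hsym b m]

end Aux

theorem increasing_and_decreasing_tours_optimal_on_subsets
    {n : ℕ} (C : Fin n → Fin n → ℝ)
    (hsym : ∀ i j, C i j = C j i) (hkal : IsKalmanson C)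
    (I : Finset (Fin n)) (hI : I.Nonempty) :
    ∀ l : List (Fin n), IsTourOn I l →
      tourLen C (I.sort (· ≤ ·)) ≤ tourLen C l ∧
      tourLen C ((I.sort (· ≤ ·)).reverse) ≤ tourLen C l := by
  classical
  suffices h : ∀ (N : ℕ) (J : Finset (Fin n)), J.card ≤ N → ∀ l, IsTourOn J l →
      tourLen C (J.sort (· ≤ ·)) ≤ tourLen C l by
    intro l hl
    have h1 := h I.card I le_rfl l hl
    exact ⟨h1, by rw [tourLen_reverse C hsym]; exact h1⟩
  intro N
  induction N with
  | zero =>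
    intro J hc l hl
    have hJ : J = ∅ := Finset.card_eq_zero.mp (Nat.le_zero.mp hc)
    subst hJ
    have hl' : l = [] := (List.toFinset_eq_empty_iff _).mp hl.2
    subst hl'
    simp
  | succ N ih =>
    intro J hc l hl
    rcases J.eq_empty_or_nonempty with rfl | hJ
    · have hl' : l = [] := (List.toFinset_eq_empty_iff _).mp hl.2
      subst hl'
      simp
    obtain ⟨hnd, hfin⟩ := hl
    set m := J.max' hJ with hm_def
    have hmJ : m ∈ J := J.max'_mem hJ
    have hml : m ∈ l := by rw [← List.mem_toFinset, hfin]; exact hmJ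
    obtain ⟨l₁, l₂, rfl⟩ := List.append_of_mem hml
    have hperm : (l₁ ++ m :: l₂).Perm (m :: (l₂ ++ l₁)) := by
      have h1 : (l₁ ++ m :: l₂).Perm ((m :: l₂) ++ l₁) := List.perm_append_comm
      simpa using h1
    have hrot : tourLen C (l₁ ++ m :: l₂) = tourLen C (m :: (l₂ ++ l₁)) :=
      tourLen_rot C m l₁ l₂
    set t := l₂ ++ l₁ with ht
    have hnd' : (m :: t).Nodup := hperm.nodup_iff.mp hnd
    have hfin' : (m :: t).toFinset = J := by
      rw [← hfin]
      ext x
      rw [List.mem_toFinset, List.mem_toFinset]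
      exact hperm.mem_iff.symm
    have hmt : m ∉ t := (List.nodup_cons.mp hnd').1
    have hndt : t.Nodup := (List.nodup_cons.mp hnd').2
    have htf : t.toFinset = J.erase m := by
      ext x
      simp only [Finset.mem_erase, ← hfin', List.mem_toFinset, List.mem_cons]
      constructor
      · intro hx
        exact ⟨fun he => hmt (he ▸ hx), Or.inr hx⟩
      · rintro ⟨hne, rfl | hx⟩
        · exact absurd rfl hne
        · exact hx
    -- decomposition of the sorted list
    set S := J.sort (· ≤ ·) with hS_def
    have hSne : S ≠ [] := by
      intro h
      have : m ∈ S := (Finset.mem_sort _).mpr hmJ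
      rw [h] at this
      exact absurd this ((List.not_mem_nil (a := m)))
    have hlastS : S.getLast hSne = m := by
      have h1 : S.getLast hSne ∈ J := (Finset.mem_sort _).mp (List.getLast_mem hSne)
      have h2 : m ≤ S.getLast hSne :=
        sorted_le_getLast (Finset.pairwise_sort _ _) ((Finset.mem_sort _).mpr hmJ) hSne
      exact le_antisymm (J.le_max' _ h1) h2
    have hdS : S.dropLast ++ [m] = S := by
      rw [← hlastS]; exact List.dropLast_append_getLast hSne
    have hndS : S.Nodup := Finset.sort_nodup _ _
    have hmdS : m ∉ S.dropLast := by
      intro hmem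
      have hnd2 : (S.dropLast ++ [m]).Nodup := by rw [hdS]; exact hndS
      exact List.disjoint_of_nodup_append hnd2 hmem (by simp)
    have hdrop_fin : S.dropLast.toFinset = J.erase m := by
      ext x
      simp only [List.mem_toFinset, Finset.mem_erase]
      constructor
      · intro hx
        refine ⟨fun he => hmdS (he ▸ hx), ?_⟩
        have : x ∈ S := by rw [← hdS]; exact List.mem_append.mpr (Or.inl hx)
        exact (Finset.mem_sort _).mp this
      · rintro ⟨hne, hxJ⟩
        have : x ∈ S := (Finset.mem_sort _).mpr hxJ
        rw [← hdS] at this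
        rcases List.mem_append.mp this with h | h
        · exact h
        · simp only [List.mem_singleton] at h
          exact absurd h hne
    have hdrop_sorted : S.dropLast.Pairwise (· ≤ ·) :=
      (Finset.pairwise_sort _ _).sublist (List.dropLast_sublist S)
    have hdrop_nodup : S.dropLast.Nodup := hndS.sublist (List.dropLast_sublist S)
    have hsort' : (J.erase m).sort (· ≤ ·) = S.dropLast := by
      rw [← hdrop_fin]
      exact (List.toFinset_sort _ hdrop_nodup).mpr hdrop_sorted
    have hSdecomp : S = (J.erase m).sort (· ≤ ·) ++ [m] := by
      rw [hsort', hdS]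
    -- main comparison
    rw [hrot, hSdecomp]
    cases ht' : t with
    | nil =>
      -- J = {m}
      have hJe : J.erase m = ∅ := by rw [← htf, ht']; simp
      rw [hJe]
      have : Finset.sort (α := Fin n) ∅ (· ≤ ·) = [] := by simp
      rw [this, List.nil_append]
    | cons a t' =>
      have htf' : (a :: t').toFinset = J.erase m := by rw [← ht']; exact htf
      have hndt' : (a :: t').Nodup := by rw [← ht']; exact hndt
      have hcard : (J.erase m).card ≤ N := by
        rw [Finset.card_erase_of_mem hmJ]
        omega
      have hIH := ih (J.erase m) hcard (a :: t') ⟨hndt', htf'⟩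
      -- S' nonempty
      set S' := (J.erase m).sort (· ≤ ·) with hS'_def
      have haJ : a ∈ J.erase m := by rw [← htf']; simp
      have hS'ne : S' ≠ [] := by
        intro h
        have : a ∈ S' := (Finset.mem_sort _).mpr haJ
        rw [h] at this
        exact absurd this ((List.not_mem_nil (a := a)))
      obtain ⟨f, S'', hfS⟩ : ∃ f S'', S' = f :: S'' := by
        cases hc : S' with
        | nil => exact absurd hc hS'ne
        | cons x xs => exact ⟨x, xs, rfl⟩
      rw [hfS]
      rw [tourLen_concat C f m S'', tourLen_cons C m a t']
      set g' := (f :: S'').getLast (by simp) with hg'_def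
      set gt := (a :: t').getLast (by simp) with hgt_def
      have hIH' : tourLen C (f :: S'') ≤ tourLen C (a :: t') := by
        rw [← hfS]; exact hIH
      -- order facts
      have hmemS' : ∀ x, x ∈ J.erase m → x ∈ f :: S'' := by
        intro x hx
        rw [← hfS]
        exact (Finset.mem_sort _).mpr hx
      have hsortS' : (f :: S'').Pairwise (· ≤ ·) := by
        rw [← hfS]; exact Finset.pairwise_sort _ _
      have hf_le : ∀ x, x ∈ J.erase m → f ≤ x := fun x hx =>
        sorted_head_le hsortS' (hmemS' x hx)
      have hle_g' : ∀ x, x ∈ J.erase m → x ≤ g' := fun x hx =>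
        sorted_le_getLast hsortS' (hmemS' x hx) (by simp)
      have hg'J : g' ∈ J.erase m := by
        rw [← (Finset.mem_sort (α := Fin n) (· ≤ ·)), ← hS'_def, hfS]
        exact List.getLast_mem _
      have hgtJ : gt ∈ J.erase m := by
        rw [← htf', List.mem_toFinset]
        exact List.getLast_mem _
      have hg'm : g' < m := by
        rcases Finset.mem_erase.mp hg'J with ⟨hne, hmem⟩
        exact lt_of_le_of_ne (J.le_max' _ hmem) hne
      -- key inequality
      have hkey : C g' m + C m f - C g' f ≤ C m a + C gt m - C gt a := by
        cases t' with
        | nil =>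
          -- t = [a]: J.erase m = {a}, so f = g' = gt = a
          have hJe : J.erase m = {a} := by rw [← htf']; simp
          have hgt_a : gt = a := by simp [hgt_def]
          have hf_a : f = a := by
            have : f ∈ J.erase m := by
              rw [← (Finset.mem_sort (α := Fin n) (· ≤ ·)), ← hS'_def, hfS]
              simp
            rw [hJe] at this
            exact Finset.mem_singleton.mp this
          have hg'_a : g' = a := by
            rw [hJe] at hg'J
            exact Finset.mem_singleton.mp hg'J
          rw [hgt_a, hf_a, hg'_a]
          linarith [hsym m a, hsym a m]
        | cons b t'' =>
          have hgt_mem : gt ∈ b :: t'' := by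
            have : gt = (b :: t'').getLast (by simp) := by
              rw [hgt_def, List.getLast_cons (by simp : (b :: t'') ≠ [])]
            rw [this]
            exact List.getLast_mem _
          have hane : a ≠ gt := by
            intro he
            have : a ∉ b :: t'' := (List.nodup_cons.mp hndt').1
            exact this (he ▸ hgt_mem)
          have hfa : f ≤ a := hf_le a haJ
          have hfgt : f ≤ gt := hf_le gt hgtJ
          have hag' : a ≤ g' := hle_g' a haJ
          have hgtg' : gt ≤ g' := hle_g' gt hgtJ
          rcases lt_or_gt_of_ne hane with hab | hab
          · exact kalmanson_key C hsym hkal hfa hab hgtg' hg'm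
          · have := kalmanson_key C hsym hkal hfgt hab hag' hg'm
            linarith [hsym m a, hsym a m, hsym gt m, hsym m gt, hsym gt a, hsym a gt]
      linarith [hIH', hkey]
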